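/- Let (x^l)_{l≥0} be the sequence generated by x^{l+1} = G(x^l) from a starting point x^0 ∈ (ℝ^n)^M × ℝ^n × S_n^{++}(ℝ). Then every accumulation point x* ∈ (ℝ^n)^M × ℝ^n × S_n^{++}(ℝ) of (x^l) is a fixed point of G: G(x*) = x*. -/

import Mathlib

open Matrix Filter

noncomputable def f (n M : ℕ) (κ ν : ℝ) (Z : Fin M → Fin n → ℝ)
    (D : Fin M → Matrix (Fin n) (Fin n) ℝ) (SN : Fin M → Matrix (Fin n) (Fin n) ℝ)
    (μ0 : Fin n → ℝ) (S0 : Matrix (Fin n) (Fin n) ℝ)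
    (C : Fin M → Fin n → ℝ) (μ : Fin n → ℝ) (Λ : Matrix (Fin n) (Fin n) ℝ) : ℝ :=
  (1/2) * ∑ i, (Z i - (D i).mulVec (C i)) ⬝ᵥ ((SN i)⁻¹).mulVec (Z i - (D i).mulVec (C i))
    - ((ν - n + M)/2) * Real.log Λ.det
    + (1/2) * ∑ i, (C i - μ) ⬝ᵥ Λ.mulVec (C i - μ)
    + (κ/2) * ((μ - μ0) ⬝ᵥ Λ.mulVec (μ - μ0))
    + (1/2) * (ν • S0 * Λ).trace

/-- The alternating-minimization map `G` on `(ℝⁿ)^M × ℝⁿ × S_n^{++}(ℝ)`. -/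
noncomputable def G (n M : ℕ) (κ ν : ℝ) (Z : Fin M → Fin n → ℝ)
    (D : Fin M → Matrix (Fin n) (Fin n) ℝ) (SN : Fin M → Matrix (Fin n) (Fin n) ℝ)
    (μ0 : Fin n → ℝ) (S0 : Matrix (Fin n) (Fin n) ℝ)
    (x : (Fin M → Fin n → ℝ) × (Fin n → ℝ) × Matrix (Fin n) (Fin n) ℝ) :
    (Fin M → Fin n → ℝ) × (Fin n → ℝ) × Matrix (Fin n) (Fin n) ℝ :=
  let Λ := x.2.2
  let A : Fin M → Matrix (Fin n) (Fin n) ℝ :=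
    fun i => Λ⁻¹ * (D i)ᵀ * (D i * Λ⁻¹ * (D i)ᵀ + SN i)⁻¹
  let μ' : Fin n → ℝ :=
    (κ • (1 : Matrix (Fin n) (Fin n) ℝ) + ∑ i, A i * D i)⁻¹.mulVec
      (∑ i, (A i).mulVec (Z i) + κ • μ0)
  let C' : Fin M → Fin n → ℝ := fun i => (A i).mulVec (Z i - (D i).mulVec μ') + μ'
  let Λ' : Matrix (Fin n) (Fin n) ℝ :=
    ((ν + M - n)⁻¹ • (ν • S0 + κ • vecMulVec (μ' - μ0) (μ' - μ0)
      + ∑ i, vecMulVec (C' i - μ') (C' i - μ')))⁻¹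
  (C', μ', Λ')


namespace Stmt14Aux


variable {n : ℕ}

lemma dot_pos {A : Matrix (Fin n) (Fin n) ℝ} (hA : A.PosDef) {x : Fin n → ℝ} (hx : x ≠ 0) :
    0 < x ⬝ᵥ A *ᵥ x := by
  simpa using hA.dotProduct_mulVec_pos hx

lemma dot_nonneg {A : Matrix (Fin n) (Fin n) ℝ} (hA : A.PosSemidef) (x : Fin n → ℝ) :
    0 ≤ x ⬝ᵥ A *ᵥ x := by
  simpa using hA.dotProduct_mulVec_nonneg x

lemma dot_sym {S : Matrix (Fin n) (Fin n) ℝ} (hS : Sᵀ = S) (u v : Fin n → ℝ) :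
    u ⬝ᵥ S *ᵥ v = v ⬝ᵥ S *ᵥ u := by
  have hs : ∀ i j, S i j = S j i := fun i j => (congrFun (congrFun hS i) j).symm.trans (Matrix.transpose_apply S i j)
  simp only [dotProduct, Matrix.mulVec, Finset.mul_sum]
  rw [Finset.sum_comm]
  refine Finset.sum_congr rfl fun j _ => Finset.sum_congr rfl fun i _ => by rw [hs i j]; ring

lemma quad_sub {S : Matrix (Fin n) (Fin n) ℝ} (hS : Sᵀ = S) (u d : Fin n → ℝ) :
    (u - d) ⬝ᵥ S *ᵥ (u - d) = u ⬝ᵥ S *ᵥ u - 2 * (d ⬝ᵥ S *ᵥ u) + d ⬝ᵥ S *ᵥ d := by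
  rw [Matrix.mulVec_sub, sub_dotProduct, dotProduct_sub,
    dotProduct_sub, dot_sym hS u d]
  ring

lemma quad_add {S : Matrix (Fin n) (Fin n) ℝ} (hS : Sᵀ = S) (u d : Fin n → ℝ) :
    (u + d) ⬝ᵥ S *ᵥ (u + d) = u ⬝ᵥ S *ᵥ u + 2 * (d ⬝ᵥ S *ᵥ u) + d ⬝ᵥ S *ᵥ d := by
  rw [Matrix.mulVec_add, add_dotProduct, dotProduct_add,
    dotProduct_add, dot_sym hS u d]
  ring

lemma trace_vecMulVec_mul (u v : Fin n → ℝ) (Λ : Matrix (Fin n) (Fin n) ℝ) :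
    (vecMulVec u v * Λ).trace = v ⬝ᵥ Λ *ᵥ u := by
  simp only [Matrix.trace, Matrix.diag, Matrix.mul_apply, Matrix.vecMulVec_apply,
    dotProduct, Matrix.mulVec, Finset.mul_sum]
  rw [Finset.sum_comm]
  refine Finset.sum_congr rfl fun j _ => Finset.sum_congr rfl fun i _ => by ring

lemma posDef_smul {A : Matrix (Fin n) (Fin n) ℝ} (hA : A.PosDef) {a : ℝ} (ha : 0 < a) :
    (a • A).PosDef := by
  refine Matrix.PosDef.of_dotProduct_mulVec_pos ?_ fun x hx => ?_
  · unfold Matrix.IsHermitian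
    rw [Matrix.conjTranspose_smul, hA.isHermitian.eq]
    simp
  · rw [Matrix.smul_mulVec, dotProduct_smul]
    exact smul_pos ha (hA.dotProduct_mulVec_pos hx)

lemma posSemidef_vecMulVec (v : Fin n → ℝ) : (vecMulVec v v).PosSemidef := by
  refine Matrix.PosSemidef.of_dotProduct_mulVec_nonneg ?_ fun x => ?_
  · unfold Matrix.IsHermitian
    ext i j
    simp [Matrix.vecMulVec_apply, mul_comm]
  · have : (star x) ⬝ᵥ (vecMulVec v v) *ᵥ x = (v ⬝ᵥ x) * (v ⬝ᵥ x) := by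
      simp only [dotProduct, Matrix.mulVec, Matrix.vecMulVec_apply, star_trivial,
        Finset.sum_mul, Finset.mul_sum]
      rw [Finset.sum_comm]
      refine Finset.sum_congr rfl fun j _ => Finset.sum_congr rfl fun i _ => by
        simp [mul_comm, mul_assoc, mul_left_comm]
    rw [this]
    exact mul_self_nonneg _


lemma trace_eq_sum_eig {W : Matrix (Fin n) (Fin n) ℝ} (hH : W.IsHermitian) :
    W.trace = ∑ i, hH.eigenvalues i := by
  rw [hH.trace_eq_sum_eigenvalues]
  have h1 : (star (hH.eigenvectorUnitary : Matrix (Fin n) (Fin n) ℝ)) *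
      (hH.eigenvectorUnitary : Matrix (Fin n) (Fin n) ℝ) = 1 :=
    (Unitary.mem_iff.mp (hH.eigenvectorUnitary).2).1
  simp

lemma eig_one_eq {W : Matrix (Fin n) (Fin n) ℝ} (hH : W.IsHermitian)
    (h : ∀ i, hH.eigenvalues i = 1) : W = 1 := by
  have h2 : (hH.eigenvectorUnitary : Matrix (Fin n) (Fin n) ℝ) *
      (star (hH.eigenvectorUnitary : Matrix (Fin n) (Fin n) ℝ)) = 1 :=
    (Unitary.mem_iff.mp (hH.eigenvectorUnitary).2).2
  have h3 := hH.spectral_theorem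
  have : Matrix.diagonal (RCLike.ofReal ∘ hH.eigenvalues) = (1 : Matrix (Fin n) (Fin n) ℝ) := by
    have he : (RCLike.ofReal ∘ hH.eigenvalues : Fin n → ℝ) = fun _ => 1 :=
      funext fun i => by simp [h i]
    rw [he, Matrix.diagonal_one]
  rw [this, map_one] at h3
  exact h3

lemma n_le_trace_sub_log_det {W : Matrix (Fin n) (Fin n) ℝ} (hW : W.PosDef) :
    (n : ℝ) ≤ W.trace - Real.log W.det ∧
      (W.trace - Real.log W.det = (n : ℝ) → W = 1) := by
  have hH := hW.isHermitian
  have hev : ∀ i, 0 < hH.eigenvalues i := hW.eigenvalues_pos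
  have htr : W.trace = ∑ i, hH.eigenvalues i := trace_eq_sum_eig hH
  have hdet : Real.log W.det = ∑ i, Real.log (hH.eigenvalues i) := by
    rw [hH.det_eq_prod_eigenvalues]
    exact Real.log_prod fun i _ => (hev i).ne'
  have hterm : ∀ i : Fin n, (1 : ℝ) ≤ hH.eigenvalues i - Real.log (hH.eigenvalues i) := by
    intro i
    have := Real.log_le_sub_one_of_pos (hev i)
    linarith
  have hsum : W.trace - Real.log W.det = ∑ i, (hH.eigenvalues i - Real.log (hH.eigenvalues i)) := by
    rw [htr, hdet, Finset.sum_sub_distrib]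
  constructor
  · rw [hsum]
    calc (n : ℝ) = ∑ _i : Fin n, (1 : ℝ) := by simp
    _ ≤ _ := Finset.sum_le_sum fun i _ => hterm i
  · intro h
    refine eig_one_eq hH fun i => ?_
    by_contra hne
    have hstrict : (1 : ℝ) < hH.eigenvalues i - Real.log (hH.eigenvalues i) := by
      have := Real.log_lt_sub_one_of_pos (hev i) hne
      linarith
    have : (n : ℝ) < ∑ j, (hH.eigenvalues j - Real.log (hH.eigenvalues j)) := by
      calc (n : ℝ) = ∑ _j : Fin n, (1 : ℝ) := by simp
      _ < _ := Finset.sum_lt_sum (fun j _ => hterm j) ⟨i, Finset.mem_univ i, hstrict⟩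
    rw [hsum] at h
    linarith

open scoped MatrixOrder in
lemma key2_core {S Λ : Matrix (Fin n) (Fin n) ℝ} (hS : S.PosDef) (hΛ : Λ.PosDef)
    {a : ℝ} (ha : 0 < a) :
    (S * (a⁻¹ • S)⁻¹).trace - a * Real.log ((a⁻¹ • S)⁻¹).det
      ≤ (S * Λ).trace - a * Real.log Λ.det ∧
    ((S * Λ).trace - a * Real.log Λ.det
      = (S * (a⁻¹ • S)⁻¹).trace - a * Real.log ((a⁻¹ • S)⁻¹).det → Λ = (a⁻¹ • S)⁻¹) := by
  have hP : (a⁻¹ • S).PosDef := posDef_smul hS (inv_pos.mpr ha)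
  set P := a⁻¹ • S with hPdef
  have hPpsd := hP.posSemidef
  set Q := CFC.sqrt P with hQdef
  have hQpsd : Q.PosSemidef := (CFC.sqrt_nonneg P).posSemidef
  have hQQ : Q * Q = P := CFC.sqrt_mul_sqrt_self P hPpsd.nonneg
  have hdetP : 0 < P.det := hP.det_pos
  have hdetQ : Q.det ≠ 0 := by
    intro h
    have hd : Q.det * Q.det = P.det := by rw [← Matrix.det_mul, hQQ]
    rw [h, mul_zero] at hd
    exact hdetP.ne' hd.symm
  have hQu : IsUnit Q.det := isUnit_iff_ne_zero.mpr hdetQ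
  have hQuM : IsUnit Q := (Matrix.isUnit_iff_isUnit_det Q).mpr hQu
  have hQT : Qᵀ = Q := by
    rw [← Matrix.conjTranspose_eq_transpose_of_trivial]
    exact hQpsd.isHermitian
  have hSP : S = a • P := by
    rw [hPdef, smul_smul, mul_inv_cancel₀ ha.ne', one_smul]
  -- positive definiteness of the conjugated matrix
  have hWpd : ∀ Λ₁ : Matrix (Fin n) (Fin n) ℝ, Λ₁.PosDef → (Q * Λ₁ * Q).PosDef := by
    intro Λ₁ hΛ₁
    refine Matrix.PosDef.of_dotProduct_mulVec_pos ?_ fun x hx => ?_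
    · unfold Matrix.IsHermitian
      rw [Matrix.conjTranspose_mul, Matrix.conjTranspose_mul, hQpsd.isHermitian.eq,
        hΛ₁.isHermitian.eq, mul_assoc]
    · have hx' : Q *ᵥ x ≠ 0 := by
        intro h
        exact hx (Matrix.mulVec_injective_iff_isUnit.mpr hQuM (h.trans (Matrix.mulVec_zero Q).symm))
      have key : x ⬝ᵥ (Q * Λ₁ * Q) *ᵥ x = (Q *ᵥ x) ⬝ᵥ Λ₁ *ᵥ (Q *ᵥ x) := by
        rw [mul_assoc, ← Matrix.mulVec_mulVec, Matrix.dotProduct_mulVec,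
          ← Matrix.mulVec_transpose, hQT, ← Matrix.mulVec_mulVec]
      have hpos := dot_pos hΛ₁ hx'
      rw [← key] at hpos
      simpa using hpos
  -- value formula
  have hval : ∀ Λ₁ : Matrix (Fin n) (Fin n) ℝ, Λ₁.PosDef →
      (S * Λ₁).trace - a * Real.log Λ₁.det
        = a * ((Q * Λ₁ * Q).trace - Real.log (Q * Λ₁ * Q).det) + a * Real.log P.det := by
    intro Λ₁ hΛ₁
    have htr : (S * Λ₁).trace = a * (Q * Λ₁ * Q).trace := by
      rw [hSP, smul_mul_assoc, Matrix.trace_smul, Matrix.trace_mul_cycle Q Λ₁ Q, hQQ]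
      rfl
    have hdet1 : (Q * Λ₁ * Q).det = P.det * Λ₁.det := by
      rw [Matrix.det_mul, Matrix.det_mul, ← hQQ, Matrix.det_mul]
      ring
    have hlog : Real.log (Q * Λ₁ * Q).det = Real.log P.det + Real.log Λ₁.det := by
      rw [hdet1, Real.log_mul hdetP.ne' hΛ₁.det_pos.ne']
    rw [htr, hlog]
    ring
  -- the candidate minimizer
  have hPinv : (P⁻¹).PosDef := hP.inv
  have hWone : Q * P⁻¹ * Q = 1 := by
    rw [← hQQ, Matrix.mul_inv_rev, ← mul_assoc, Matrix.mul_nonsing_inv _ hQu, one_mul,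
      Matrix.nonsing_inv_mul _ hQu]
  have hvL := hval Λ hΛ
  have hvI := hval P⁻¹ hPinv
  rw [hWone] at hvI
  have hIone : (1 : Matrix (Fin n) (Fin n) ℝ).trace - Real.log (1 : Matrix (Fin n) (Fin n) ℝ).det
      = (n : ℝ) := by simp
  rw [hIone] at hvI
  have hWn := n_le_trace_sub_log_det (hWpd Λ hΛ)
  constructor
  · rw [hvL, hvI]
    have := mul_le_mul_of_nonneg_left hWn.1 ha.le
    linarith
  · intro h
    rw [hvL, hvI] at h
    have h2 : (Q * Λ * Q).trace - Real.log (Q * Λ * Q).det = (n : ℝ) :=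
      mul_left_cancel₀ ha.ne' (by linarith)
    have hW1 : Q * Λ * Q = 1 := hWn.2 h2
    have h4 : Q⁻¹ * (Q * Λ * Q) * Q⁻¹ = Λ := by
      rw [mul_assoc Q Λ Q, ← mul_assoc Q⁻¹ Q (Λ * Q), Matrix.nonsing_inv_mul _ hQu, one_mul,
        mul_assoc, Matrix.mul_nonsing_inv _ hQu, mul_one]
    rw [← h4, hW1, mul_one, ← Matrix.mul_inv_rev, hQQ]



variable {n M : ℕ}

noncomputable def Aa (D SN : Fin M → Matrix (Fin n) (Fin n) ℝ)
    (Λ : Matrix (Fin n) (Fin n) ℝ) (i : Fin M) : Matrix (Fin n) (Fin n) ℝ :=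
  Λ⁻¹ * (D i)ᵀ * (D i * Λ⁻¹ * (D i)ᵀ + SN i)⁻¹

noncomputable def mup (κ : ℝ) (Z : Fin M → Fin n → ℝ) (D SN : Fin M → Matrix (Fin n) (Fin n) ℝ)
    (μ0 : Fin n → ℝ) (Λ : Matrix (Fin n) (Fin n) ℝ) : Fin n → ℝ :=
  (κ • (1 : Matrix (Fin n) (Fin n) ℝ) + ∑ i, Aa D SN Λ i * D i)⁻¹.mulVec
    (∑ i, (Aa D SN Λ i).mulVec (Z i) + κ • μ0)

noncomputable def Cp (κ : ℝ) (Z : Fin M → Fin n → ℝ) (D SN : Fin M → Matrix (Fin n) (Fin n) ℝ)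
    (μ0 : Fin n → ℝ) (Λ : Matrix (Fin n) (Fin n) ℝ) (i : Fin M) : Fin n → ℝ :=
  (Aa D SN Λ i).mulVec (Z i - (D i).mulVec (mup κ Z D SN μ0 Λ)) + mup κ Z D SN μ0 Λ

noncomputable def Smat (κ ν : ℝ) (μ0 : Fin n → ℝ) (S0 : Matrix (Fin n) (Fin n) ℝ)
    (C : Fin M → Fin n → ℝ) (μ : Fin n → ℝ) : Matrix (Fin n) (Fin n) ℝ :=
  ν • S0 + κ • vecMulVec (μ - μ0) (μ - μ0) + ∑ i, vecMulVec (C i - μ) (C i - μ)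

noncomputable def Lp (κ ν : ℝ) (Z : Fin M → Fin n → ℝ) (D SN : Fin M → Matrix (Fin n) (Fin n) ℝ)
    (μ0 : Fin n → ℝ) (S0 : Matrix (Fin n) (Fin n) ℝ) (Λ : Matrix (Fin n) (Fin n) ℝ) :
    Matrix (Fin n) (Fin n) ℝ :=
  ((ν + M - n)⁻¹ • Smat κ ν μ0 S0 (Cp κ Z D SN μ0 Λ) (mup κ Z D SN μ0 Λ))⁻¹

lemma G_eq (κ ν : ℝ) (Z : Fin M → Fin n → ℝ) (D SN : Fin M → Matrix (Fin n) (Fin n) ℝ)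
    (μ0 : Fin n → ℝ) (S0 : Matrix (Fin n) (Fin n) ℝ)
    (x : (Fin M → Fin n → ℝ) × (Fin n → ℝ) × Matrix (Fin n) (Fin n) ℝ) :
    G n M κ ν Z D SN μ0 S0 x
      = (Cp κ Z D SN μ0 x.2.2, mup κ Z D SN μ0 x.2.2, Lp κ ν Z D SN μ0 S0 x.2.2) := rfl


lemma sum_mulVec {ι : Type*} (s : Finset ι) (N : ι → Matrix (Fin n) (Fin n) ℝ) (v : Fin n → ℝ) :
    (∑ i ∈ s, N i) *ᵥ v = ∑ i ∈ s, N i *ᵥ v := by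
  induction s using Finset.cons_induction with
  | empty => simp
  | cons a s ha ih => rw [Finset.sum_cons, Finset.sum_cons, Matrix.add_mulVec, ih]

variable {M : ℕ} {κ ν : ℝ} {Z : Fin M → Fin n → ℝ} {D SN : Fin M → Matrix (Fin n) (Fin n) ℝ}
  {μ0 : Fin n → ℝ} {S0 : Matrix (Fin n) (Fin n) ℝ} {Λ : Matrix (Fin n) (Fin n) ℝ}

lemma hB_posDef (hΛ : Λ.PosDef) (hSN : ∀ i, (SN i).PosDef) (i : Fin M) :
    (D i * Λ⁻¹ * (D i)ᵀ + SN i).PosDef := by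
  have h1 : (D i * Λ⁻¹ * (D i)ᵀ).PosSemidef := by
    have := hΛ.inv.posSemidef.mul_mul_conjTranspose_same (B := D i)
    rwa [Matrix.conjTranspose_eq_transpose_of_trivial] at this
  exact Matrix.PosDef.posSemidef_add h1 (hSN i)

lemma hLambdaA (hΛ : Λ.PosDef) (i : Fin M) :
    Λ * Aa D SN Λ i = (D i)ᵀ * (D i * Λ⁻¹ * (D i)ᵀ + SN i)⁻¹ := by
  have hΛd : IsUnit Λ.det := isUnit_iff_ne_zero.mpr hΛ.det_pos.ne'
  unfold Aa
  rw [← mul_assoc, ← mul_assoc, Matrix.mul_nonsing_inv _ hΛd, one_mul]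

lemma hK_eq (hΛ : Λ.PosDef) :
    Λ * (κ • (1 : Matrix (Fin n) (Fin n) ℝ) + ∑ i, Aa D SN Λ i * D i)
      = κ • Λ + ∑ i, (D i)ᵀ * (D i * Λ⁻¹ * (D i)ᵀ + SN i)⁻¹ * D i := by
  rw [mul_add, Finset.mul_sum, mul_smul_comm, mul_one]
  congr 1
  refine Finset.sum_congr rfl fun i _ => ?_
  rw [← mul_assoc, hLambdaA hΛ]

lemma hK2_posDef (hκ : 0 < κ) (hΛ : Λ.PosDef) (hSN : ∀ i, (SN i).PosDef) :
    (κ • Λ + ∑ i, (D i)ᵀ * (D i * Λ⁻¹ * (D i)ᵀ + SN i)⁻¹ * D i).PosDef := by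
  refine (posDef_smul hΛ hκ).add_posSemidef ?_
  refine Finset.sum_induction _ _ (fun a b ha hb => ha.add hb) Matrix.PosSemidef.zero ?_
  intro i _
  have := Matrix.PosSemidef.conjTranspose_mul_mul_same
    (A := (D i * Λ⁻¹ * (D i)ᵀ + SN i)⁻¹) (B := D i) ((hB_posDef hΛ hSN i).inv.posSemidef)
  rwa [Matrix.conjTranspose_eq_transpose_of_trivial] at this

lemma hK_det (hκ : 0 < κ) (hΛ : Λ.PosDef) (hSN : ∀ i, (SN i).PosDef) :
    IsUnit (κ • (1 : Matrix (Fin n) (Fin n) ℝ) + ∑ i, Aa D SN Λ i * D i).det := by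
  have h := congrArg Matrix.det (hK_eq (D := D) (SN := SN) (κ := κ) hΛ)
  rw [Matrix.det_mul] at h
  refine isUnit_iff_ne_zero.mpr fun h0 => ?_
  rw [h0, mul_zero] at h
  exact (hK2_posDef hκ hΛ hSN).det_pos.ne' h.symm

lemma hKmu (hκ : 0 < κ) (hΛ : Λ.PosDef) (hSN : ∀ i, (SN i).PosDef) :
    (κ • (1 : Matrix (Fin n) (Fin n) ℝ) + ∑ i, Aa D SN Λ i * D i) *ᵥ mup κ Z D SN μ0 Λ
      = ∑ i, (Aa D SN Λ i) *ᵥ Z i + κ • μ0 := by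
  unfold mup
  rw [Matrix.mulVec_mulVec, Matrix.mul_nonsing_inv _ (hK_det hκ hΛ hSN), Matrix.one_mulVec]

lemma E2 (hκ : 0 < κ) (hΛ : Λ.PosDef) (hSN : ∀ i, (SN i).PosDef) :
    ∑ i, (Cp κ Z D SN μ0 Λ i - mup κ Z D SN μ0 Λ) = κ • (mup κ Z D SN μ0 Λ - μ0) := by
  have hK := hKmu (Z := Z) (D := D) (μ0 := μ0) hκ hΛ hSN
  rw [Matrix.add_mulVec, Matrix.smul_mulVec, Matrix.one_mulVec, sum_mulVec] at hK
  calc ∑ i, (Cp κ Z D SN μ0 Λ i - mup κ Z D SN μ0 Λ)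
      = ∑ i, (Aa D SN Λ i *ᵥ Z i - (Aa D SN Λ i * D i) *ᵥ mup κ Z D SN μ0 Λ) := by
        refine Finset.sum_congr rfl fun i _ => ?_
        rw [show Cp κ Z D SN μ0 Λ i - mup κ Z D SN μ0 Λ
            = Aa D SN Λ i *ᵥ (Z i - (D i) *ᵥ mup κ Z D SN μ0 Λ) from add_sub_cancel_right _ _,
          Matrix.mulVec_sub, Matrix.mulVec_mulVec]
    _ = ∑ i, Aa D SN Λ i *ᵥ Z i - ∑ i, (Aa D SN Λ i * D i) *ᵥ mup κ Z D SN μ0 Λ :=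
        Finset.sum_sub_distrib _ _
    _ = κ • (mup κ Z D SN μ0 Λ - μ0) := by
        have h2 : ∑ i, (Aa D SN Λ i * D i) *ᵥ mup κ Z D SN μ0 Λ
            = ∑ i, Aa D SN Λ i *ᵥ Z i + κ • μ0 - κ • mup κ Z D SN μ0 Λ := by
          rw [← hK]; abel
        rw [h2, smul_sub]; abel

lemma E1 (_hκ : 0 < κ) (hΛ : Λ.PosDef) (hSN : ∀ i, (SN i).PosDef) (i : Fin M) :
    Λ *ᵥ (Cp κ Z D SN μ0 Λ i - mup κ Z D SN μ0 Λ)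
      = (D i)ᵀ *ᵥ ((SN i)⁻¹ *ᵥ (Z i - (D i) *ᵥ Cp κ Z D SN μ0 Λ i)) := by
  set μ' := mup κ Z D SN μ0 Λ with hμ'
  set B := D i * Λ⁻¹ * (D i)ᵀ + SN i with hBdef
  have hBu : IsUnit B.det := isUnit_iff_ne_zero.mpr (hB_posDef hΛ hSN i).det_pos.ne'
  have hSNu : IsUnit (SN i).det := isUnit_iff_ne_zero.mpr (hSN i).det_pos.ne'
  have hw : Z i - (D i) *ᵥ Cp κ Z D SN μ0 Λ i = (SN i * B⁻¹) *ᵥ (Z i - (D i) *ᵥ μ') := by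
    have hCp : Cp κ Z D SN μ0 Λ i = Aa D SN Λ i *ᵥ (Z i - (D i) *ᵥ μ') + μ' := rfl
    have hDA : D i * Aa D SN Λ i = D i * Λ⁻¹ * (D i)ᵀ * B⁻¹ := by
      unfold Aa
      rw [← mul_assoc, ← mul_assoc]
    have h1mB : (1 : Matrix (Fin n) (Fin n) ℝ) - D i * Λ⁻¹ * (D i)ᵀ * B⁻¹ = SN i * B⁻¹ := by
      have hSNB : SN i = B - D i * Λ⁻¹ * (D i)ᵀ := by rw [hBdef]; abel
      rw [hSNB, Matrix.sub_mul, Matrix.mul_nonsing_inv _ hBu]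
    rw [hCp, Matrix.mulVec_add, Matrix.mulVec_mulVec, hDA, ← h1mB, Matrix.sub_mulVec,
      Matrix.one_mulVec, Matrix.mulVec_sub]
    abel
  have hmm : (D i)ᵀ * (SN i)⁻¹ * (SN i * B⁻¹) = (D i)ᵀ * B⁻¹ := by
    rw [mul_assoc, ← mul_assoc ((SN i)⁻¹), Matrix.nonsing_inv_mul _ hSNu, one_mul]
  have hRHS : (D i)ᵀ *ᵥ ((SN i)⁻¹ *ᵥ (Z i - (D i) *ᵥ Cp κ Z D SN μ0 Λ i))
      = ((D i)ᵀ * B⁻¹) *ᵥ (Z i - (D i) *ᵥ μ') := by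
    rw [hw, Matrix.mulVec_mulVec, Matrix.mulVec_mulVec, hmm]
  have hLHS : Λ *ᵥ (Cp κ Z D SN μ0 Λ i - μ')
      = ((D i)ᵀ * B⁻¹) *ᵥ (Z i - (D i) *ᵥ μ') := by
    rw [show Cp κ Z D SN μ0 Λ i - μ' = Aa D SN Λ i *ᵥ (Z i - (D i) *ᵥ μ') from
        add_sub_cancel_right _ _,
      Matrix.mulVec_mulVec, hLambdaA hΛ, ← hBdef]
  exact hLHS.trans hRHS.symm

lemma mulVec_sumv {ι : Type*} (s : Finset ι) (A : Matrix (Fin n) (Fin n) ℝ)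
    (v : ι → Fin n → ℝ) : A *ᵥ (∑ i ∈ s, v i) = ∑ i ∈ s, A *ᵥ v i := by
  induction s using Finset.cons_induction with
  | empty => simp
  | cons a s ha ih => rw [Finset.sum_cons, Finset.sum_cons, Matrix.mulVec_add, ih]

lemma dotProduct_sumv {ι : Type*} (s : Finset ι) (v : Fin n → ℝ)
    (w : ι → Fin n → ℝ) : v ⬝ᵥ (∑ i ∈ s, w i) = ∑ i ∈ s, v ⬝ᵥ w i := by
  induction s using Finset.cons_induction with
  | empty => simp
  | cons a s ha ih => rw [Finset.sum_cons, Finset.sum_cons, dotProduct_add, ih]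

lemma key1 (hκ : 0 < κ) (hSN : ∀ i, (SN i).PosDef) (hΛ : Λ.PosDef)
    (C : Fin M → Fin n → ℝ) (μ : Fin n → ℝ) :
    f n M κ ν Z D SN μ0 S0 (Cp κ Z D SN μ0 Λ) (mup κ Z D SN μ0 Λ) Λ
      ≤ f n M κ ν Z D SN μ0 S0 C μ Λ
    ∧ (f n M κ ν Z D SN μ0 S0 C μ Λ
        = f n M κ ν Z D SN μ0 S0 (Cp κ Z D SN μ0 Λ) (mup κ Z D SN μ0 Λ) Λ
      → C = Cp κ Z D SN μ0 Λ ∧ μ = mup κ Z D SN μ0 Λ) := by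
  have hΛT : Λᵀ = Λ := by
    rw [← Matrix.conjTranspose_eq_transpose_of_trivial]; exact hΛ.isHermitian
  have hSNT : ∀ i, ((SN i)⁻¹)ᵀ = (SN i)⁻¹ := fun i => by
    rw [← Matrix.conjTranspose_eq_transpose_of_trivial]; exact (hSN i).inv.isHermitian
  set C' := Cp κ Z D SN μ0 Λ with hC'
  set μ' := mup κ Z D SN μ0 Λ with hμ'
  have h1 : ∀ i, (Z i - (D i) *ᵥ C i) ⬝ᵥ (SN i)⁻¹ *ᵥ (Z i - (D i) *ᵥ C i)
      = (Z i - (D i) *ᵥ C' i) ⬝ᵥ (SN i)⁻¹ *ᵥ (Z i - (D i) *ᵥ C' i)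
        - 2 * (((D i) *ᵥ (C i - C' i)) ⬝ᵥ (SN i)⁻¹ *ᵥ (Z i - (D i) *ᵥ C' i))
        + ((D i) *ᵥ (C i - C' i)) ⬝ᵥ (SN i)⁻¹ *ᵥ ((D i) *ᵥ (C i - C' i)) := by
    intro i
    have e : Z i - (D i) *ᵥ C i = (Z i - (D i) *ᵥ C' i) - (D i) *ᵥ (C i - C' i) := by
      rw [Matrix.mulVec_sub]; abel
    rw [e, quad_sub (hSNT i)]
  have h2 : ∀ i, (C i - μ) ⬝ᵥ Λ *ᵥ (C i - μ)
      = (C' i - μ') ⬝ᵥ Λ *ᵥ (C' i - μ')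
        + 2 * (((C i - C' i) - (μ - μ')) ⬝ᵥ Λ *ᵥ (C' i - μ'))
        + ((C i - C' i) - (μ - μ')) ⬝ᵥ Λ *ᵥ ((C i - C' i) - (μ - μ')) := by
    intro i
    have e : C i - μ = (C' i - μ') + ((C i - C' i) - (μ - μ')) := by abel
    rw [e, quad_add hΛT]
  have h3 : (μ - μ0) ⬝ᵥ Λ *ᵥ (μ - μ0)
      = (μ' - μ0) ⬝ᵥ Λ *ᵥ (μ' - μ0) + 2 * ((μ - μ') ⬝ᵥ Λ *ᵥ (μ' - μ0))
        + (μ - μ') ⬝ᵥ Λ *ᵥ (μ - μ') := by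
    have e : μ - μ0 = (μ' - μ0) + (μ - μ') := by abel
    rw [e, quad_add hΛT]
  have hcross : ∑ i, (((C i - C' i) - (μ - μ')) ⬝ᵥ Λ *ᵥ (C' i - μ'))
      = ∑ i, (((D i) *ᵥ (C i - C' i)) ⬝ᵥ (SN i)⁻¹ *ᵥ (Z i - (D i) *ᵥ C' i))
        - κ * ((μ - μ') ⬝ᵥ Λ *ᵥ (μ' - μ0)) := by
    have hterm : ∀ i, ((C i - C' i) - (μ - μ')) ⬝ᵥ Λ *ᵥ (C' i - μ')
        = ((D i) *ᵥ (C i - C' i)) ⬝ᵥ (SN i)⁻¹ *ᵥ (Z i - (D i) *ᵥ C' i)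
          - (μ - μ') ⬝ᵥ Λ *ᵥ (C' i - μ') := by
      intro i
      rw [sub_dotProduct]
      congr 1
      rw [E1 hκ hΛ hSN i, Matrix.dotProduct_mulVec, Matrix.vecMul_transpose]
    rw [Finset.sum_congr rfl fun i _ => hterm i, Finset.sum_sub_distrib]
    congr 1
    rw [← dotProduct_sumv, ← mulVec_sumv, E2 hκ hΛ hSN, Matrix.mulVec_smul,
      dotProduct_smul, smul_eq_mul]
  have hid : f n M κ ν Z D SN μ0 S0 C μ Λ
      = f n M κ ν Z D SN μ0 S0 C' μ' Λ
        + ((1/2) * ∑ i, ((D i) *ᵥ (C i - C' i)) ⬝ᵥ (SN i)⁻¹ *ᵥ ((D i) *ᵥ (C i - C' i))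
          + (1/2) * ∑ i, ((C i - C' i) - (μ - μ')) ⬝ᵥ Λ *ᵥ ((C i - C' i) - (μ - μ'))
          + (κ/2) * ((μ - μ') ⬝ᵥ Λ *ᵥ (μ - μ'))) := by
    unfold f
    simp only [h1, h2, h3]
    simp only [Finset.sum_add_distrib, Finset.sum_sub_distrib, ← Finset.mul_sum]
    linear_combination hcross
  have ht1 : 0 ≤ ∑ i, ((D i) *ᵥ (C i - C' i)) ⬝ᵥ (SN i)⁻¹ *ᵥ ((D i) *ᵥ (C i - C' i)) :=
    Finset.sum_nonneg fun i _ => dot_nonneg ((hSN i).inv.posSemidef) _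
  have ht2 : ∀ i, (0:ℝ) ≤ ((C i - C' i) - (μ - μ')) ⬝ᵥ Λ *ᵥ ((C i - C' i) - (μ - μ')) :=
    fun i => dot_nonneg hΛ.posSemidef _
  have ht2s : 0 ≤ ∑ i, ((C i - C' i) - (μ - μ')) ⬝ᵥ Λ *ᵥ ((C i - C' i) - (μ - μ')) :=
    Finset.sum_nonneg fun i _ => ht2 i
  have ht3 : (0:ℝ) ≤ (μ - μ') ⬝ᵥ Λ *ᵥ (μ - μ') := dot_nonneg hΛ.posSemidef _
  have hk3 : (0:ℝ) ≤ κ/2 * ((μ - μ') ⬝ᵥ Λ *ᵥ (μ - μ')) :=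
    mul_nonneg (by positivity) ht3
  constructor
  · linarith [hid, ht1, ht2s, hk3]
  · intro h
    have hμeq : μ = μ' := by
      by_contra hne
      have hpos := dot_pos hΛ (sub_ne_zero.mpr hne)
      have hk3' : (0:ℝ) < κ/2 * ((μ - μ') ⬝ᵥ Λ *ᵥ (μ - μ')) := mul_pos (by positivity) hpos
      linarith [hid, h, ht1, ht2s, hk3']
    have hsum0 : ∑ i, ((C i - C' i) - (μ - μ')) ⬝ᵥ Λ *ᵥ ((C i - C' i) - (μ - μ')) = 0 := by
      linarith [hid, h, ht1, ht2s, hk3]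
    refine ⟨funext fun i => ?_, hμeq⟩
    have hterm0 : ((C i - C' i) - (μ - μ')) ⬝ᵥ Λ *ᵥ ((C i - C' i) - (μ - μ')) = 0 :=
      (Finset.sum_eq_zero_iff_of_nonneg fun j _ => ht2 j).mp hsum0 i (Finset.mem_univ i)
    have hzero : (C i - C' i) - (μ - μ') = 0 := by
      by_contra hne
      exact (dot_pos hΛ hne).ne' hterm0
    rw [hμeq, sub_self, sub_zero] at hzero
    exact sub_eq_zero.mp hzero

lemma posSemidef_smul {A : Matrix (Fin n) (Fin n) ℝ} (hA : A.PosSemidef) {a : ℝ} (ha : 0 ≤ a) :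
    (a • A).PosSemidef := by
  refine Matrix.PosSemidef.of_dotProduct_mulVec_nonneg ?_ fun x => ?_
  · unfold Matrix.IsHermitian
    rw [Matrix.conjTranspose_smul, hA.isHermitian.eq]
    simp
  · rw [Matrix.smul_mulVec, dotProduct_smul]
    exact smul_nonneg ha (hA.dotProduct_mulVec_nonneg x)

lemma Smat_posDef (hS0 : S0.PosDef) (hν : 0 < ν) (hκ : 0 ≤ κ)
    (C : Fin M → Fin n → ℝ) (μ : Fin n → ℝ) : (Smat κ ν μ0 S0 C μ).PosDef := by
  unfold Smat
  refine Matrix.PosDef.add_posSemidef (Matrix.PosDef.add_posSemidef (posDef_smul hS0 hν)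
    (posSemidef_smul (posSemidef_vecMulVec _) hκ)) ?_
  exact Finset.sum_induction _ _ (fun a b ha hb => ha.add hb) Matrix.PosSemidef.zero
    (fun i _ => posSemidef_vecMulVec _)

lemma f_decomp (C : Fin M → Fin n → ℝ) (μ : Fin n → ℝ) (Λ : Matrix (Fin n) (Fin n) ℝ) :
    f n M κ ν Z D SN μ0 S0 C μ Λ
      = (1/2) * ∑ i, (Z i - (D i) *ᵥ C i) ⬝ᵥ ((SN i)⁻¹) *ᵥ (Z i - (D i) *ᵥ C i)
        + ((1/2) * (Smat κ ν μ0 S0 C μ * Λ).trace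
          - ((ν - n + M)/2) * Real.log Λ.det) := by
  unfold f Smat
  rw [Matrix.add_mul, Matrix.add_mul, Matrix.trace_add, Matrix.trace_add, smul_mul_assoc,
    Matrix.trace_smul, Finset.sum_mul, Matrix.trace_sum]
  simp only [smul_mul_assoc, Matrix.trace_smul, trace_vecMulVec_mul, smul_eq_mul]
  ring

lemma Lp_posDef (hn : 1 ≤ n) (hM : 1 ≤ M) (hν : (n : ℝ) - 1 < ν) (hκ : 0 < κ)
    (hS0 : S0.PosDef) (Λ : Matrix (Fin n) (Fin n) ℝ) :
    (Lp (M := M) κ ν Z D SN μ0 S0 Λ).PosDef := by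
  have hn' : (1:ℝ) ≤ (n:ℝ) := by exact_mod_cast hn
  have hM' : (1:ℝ) ≤ (M:ℝ) := by exact_mod_cast hM
  have hνpos : 0 < ν := by linarith
  have ha : 0 < ν + M - n := by linarith
  exact (posDef_smul (Smat_posDef hS0 hνpos hκ.le _ _) (inv_pos.mpr ha)).inv

lemma key2 (hn : 1 ≤ n) (hM : 1 ≤ M) (hν : (n : ℝ) - 1 < ν) (hκ : 0 < κ)
    (hS0 : S0.PosDef) (C : Fin M → Fin n → ℝ) (μ : Fin n → ℝ)
    {Λ : Matrix (Fin n) (Fin n) ℝ} (hΛ : Λ.PosDef) :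
    f n M κ ν Z D SN μ0 S0 C μ (((ν + M - n)⁻¹ • Smat κ ν μ0 S0 C μ)⁻¹)
      ≤ f n M κ ν Z D SN μ0 S0 C μ Λ
    ∧ (f n M κ ν Z D SN μ0 S0 C μ Λ
        = f n M κ ν Z D SN μ0 S0 C μ (((ν + M - n)⁻¹ • Smat κ ν μ0 S0 C μ)⁻¹)
      → Λ = ((ν + M - n)⁻¹ • Smat κ ν μ0 S0 C μ)⁻¹) := by
  have hn' : (1:ℝ) ≤ (n:ℝ) := by exact_mod_cast hn
  have hM' : (1:ℝ) ≤ (M:ℝ) := by exact_mod_cast hM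
  have hνpos : 0 < ν := by linarith
  have ha : 0 < ν + M - n := by linarith
  have hS : (Smat κ ν μ0 S0 C μ).PosDef := Smat_posDef hS0 hνpos hκ.le C μ
  have hcore := key2_core hS hΛ ha
  rw [f_decomp C μ Λ, f_decomp C μ (((ν + M - n)⁻¹ • Smat κ ν μ0 S0 C μ)⁻¹)]
  constructor
  · have h1 := hcore.1
    nlinarith [h1]
  · intro h
    apply hcore.2
    linear_combination 2 * h

section Continuity

variable {X : Type*} [TopologicalSpace X] {p : X}

lemma contAt_inv {g : X → Matrix (Fin n) (Fin n) ℝ} (hg : ContinuousAt g p)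
    (h : (g p).det ≠ 0) : ContinuousAt (fun q => (g q)⁻¹) p := by
  have h1 : ContinuousAt Inv.inv (g p) := by
    refine continuousAt_matrix_inv _ ?_
    rw [Ring.inverse_eq_inv']
    exact continuousAt_inv₀ h
  exact h1.comp hg

lemma contAt_mulVec {g : X → Matrix (Fin n) (Fin n) ℝ} {v : X → Fin n → ℝ}
    (hg : ContinuousAt g p) (hv : ContinuousAt v p) :
    ContinuousAt (fun q => g q *ᵥ v q) p := by
  have hc : Continuous fun z : Matrix (Fin n) (Fin n) ℝ × (Fin n → ℝ) => z.1 *ᵥ z.2 :=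
    Continuous.matrix_mulVec continuous_fst continuous_snd
  exact hc.continuousAt.comp (hg.prodMk hv)

lemma contAt_dot {u v : X → Fin n → ℝ} (hu : ContinuousAt u p) (hv : ContinuousAt v p) :
    ContinuousAt (fun q => u q ⬝ᵥ v q) p := by
  have hc : Continuous fun z : (Fin n → ℝ) × (Fin n → ℝ) => z.1 ⬝ᵥ z.2 :=
    continuous_fst.dotProduct continuous_snd
  exact hc.continuousAt.comp (hu.prodMk hv)

lemma contAt_vecMulVec {u v : X → Fin n → ℝ} (hu : ContinuousAt u p) (hv : ContinuousAt v p) :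
    ContinuousAt (fun q => vecMulVec (u q) (v q)) p := by
  have hc : Continuous fun z : (Fin n → ℝ) × (Fin n → ℝ) => vecMulVec z.1 z.2 :=
    continuous_matrix fun i j =>
      (((continuous_apply i).comp continuous_fst).mul ((continuous_apply j).comp continuous_snd))
  exact hc.continuousAt.comp (hu.prodMk hv)

lemma contAt_trace {g : X → Matrix (Fin n) (Fin n) ℝ} (hg : ContinuousAt g p) :
    ContinuousAt (fun q => (g q).trace) p := by
  have hc : Continuous fun A : Matrix (Fin n) (Fin n) ℝ => A.trace :=
    continuous_id.matrix_trace
  exact hc.continuousAt.comp hg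

lemma contAt_det {g : X → Matrix (Fin n) (Fin n) ℝ} (hg : ContinuousAt g p) :
    ContinuousAt (fun q => (g q).det) p := by
  have hc : Continuous fun A : Matrix (Fin n) (Fin n) ℝ => A.det :=
    continuous_id.matrix_det
  exact hc.continuousAt.comp hg

lemma contAt_mul {g h : X → Matrix (Fin n) (Fin n) ℝ} (hg : ContinuousAt g p)
    (hh : ContinuousAt h p) : ContinuousAt (fun q => g q * h q) p := hg.mul hh

end Continuity

section FC

variable (n M) (κ ν : ℝ) (Z : Fin M → Fin n → ℝ) (D SN : Fin M → Matrix (Fin n) (Fin n) ℝ)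
  (μ0 : Fin n → ℝ) (S0 : Matrix (Fin n) (Fin n) ℝ)

local notation "P" => (Fin M → Fin n → ℝ) × (Fin n → ℝ) × Matrix (Fin n) (Fin n) ℝ

lemma f_contAt {p : P} (hdet : p.2.2.det ≠ 0) :
    ContinuousAt (fun q : P => f n M κ ν Z D SN μ0 S0 q.1 q.2.1 q.2.2) p := by
  have h22 : ContinuousAt (fun q : P => q.2.2) p :=
    (continuous_snd.comp continuous_snd).continuousAt
  have h21 : ContinuousAt (fun q : P => q.2.1) p :=
    (continuous_fst.comp continuous_snd).continuousAt
  have h1i : ∀ i : Fin M, ContinuousAt (fun q : P => q.1 i) p :=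
    fun i => ((continuous_apply i).comp continuous_fst).continuousAt
  have ht1 : ContinuousAt (fun q : P =>
      (1/2) * ∑ i, (Z i - (D i) *ᵥ q.1 i) ⬝ᵥ ((SN i)⁻¹) *ᵥ (Z i - (D i) *ᵥ q.1 i)) p := by
    refine continuousAt_const.mul (tendsto_finset_sum _ fun i _ => ?_)
    exact contAt_dot (continuousAt_const.sub (contAt_mulVec continuousAt_const (h1i i)))
      (contAt_mulVec continuousAt_const (continuousAt_const.sub
        (contAt_mulVec continuousAt_const (h1i i))))
  have ht2 : ContinuousAt (fun q : P => ((ν - n + M)/2) * Real.log (q.2.2).det) p := by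
    refine continuousAt_const.mul ?_
    have hdetc : ContinuousAt (fun q : P => (q.2.2).det) p := contAt_det h22
    exact ContinuousAt.comp (x := p) (g := Real.log)
      (f := fun q : P => (q.2.2).det) (Real.continuousAt_log hdet) hdetc
  have ht3 : ContinuousAt (fun q : P =>
      (1/2) * ∑ i, (q.1 i - q.2.1) ⬝ᵥ (q.2.2) *ᵥ (q.1 i - q.2.1)) p := by
    refine continuousAt_const.mul (tendsto_finset_sum _ fun i _ => ?_)
    exact contAt_dot ((h1i i).sub h21) (contAt_mulVec h22 ((h1i i).sub h21))
  have ht4 : ContinuousAt (fun q : P =>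
      (κ/2) * ((q.2.1 - μ0) ⬝ᵥ (q.2.2) *ᵥ (q.2.1 - μ0))) p := by
    refine continuousAt_const.mul ?_
    exact contAt_dot (h21.sub continuousAt_const) (contAt_mulVec h22 (h21.sub continuousAt_const))
  have ht5 : ContinuousAt (fun q : P => (1/2) * (ν • S0 * q.2.2).trace) p :=
    continuousAt_const.mul (contAt_trace (contAt_mul continuousAt_const h22))
  exact (((ht1.sub ht2).add ht3).add ht4).add ht5

lemma G_contAt (hκ : 0 < κ) (hn : 1 ≤ n) (hM : 1 ≤ M) (hν : (n : ℝ) - 1 < ν)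
    (hSN : ∀ i, (SN i).PosDef) (hS0 : S0.PosDef) {p : P} (hp : p.2.2.PosDef) :
    ContinuousAt (G n M κ ν Z D SN μ0 S0) p := by
  have h22 : ContinuousAt (fun q : P => q.2.2) p :=
    (continuous_snd.comp continuous_snd).continuousAt
  have hinv : ContinuousAt (fun q : P => (q.2.2)⁻¹) p :=
    contAt_inv h22 hp.det_pos.ne'
  have hBc : ∀ i, ContinuousAt (fun q : P => (D i * (q.2.2)⁻¹ * (D i)ᵀ + SN i)⁻¹) p := by
    intro i
    refine contAt_inv (((continuousAt_const.mul hinv).mul continuousAt_const).add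
      continuousAt_const) ?_
    exact (hB_posDef hp hSN i).det_pos.ne'
  have hAc : ∀ i, ContinuousAt (fun q : P => Aa D SN q.2.2 i) p := by
    intro i
    exact (hinv.mul continuousAt_const).mul (hBc i)
  have hKc : ContinuousAt (fun q : P =>
      κ • (1 : Matrix (Fin n) (Fin n) ℝ) + ∑ i, Aa D SN q.2.2 i * D i) p := by
    refine continuousAt_const.add (tendsto_finset_sum _ fun i _ => ?_)
    exact (hAc i).mul continuousAt_const
  have hKinvc : ContinuousAt (fun q : P =>
      (κ • (1 : Matrix (Fin n) (Fin n) ℝ) + ∑ i, Aa D SN q.2.2 i * D i)⁻¹) p :=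
    contAt_inv hKc (hK_det hκ hp hSN).ne_zero
  have hmupc : ContinuousAt (fun q : P => mup κ Z D SN μ0 q.2.2) p := by
    unfold mup
    refine contAt_mulVec hKinvc ?_
    refine ContinuousAt.add (tendsto_finset_sum _ fun i _ => ?_) continuousAt_const
    exact contAt_mulVec (hAc i) continuousAt_const
  have hCpc : ∀ i, ContinuousAt (fun q : P => Cp κ Z D SN μ0 q.2.2 i) p := by
    intro i
    unfold Cp
    refine ContinuousAt.add (contAt_mulVec (hAc i) ?_) hmupc
    exact continuousAt_const.sub (contAt_mulVec continuousAt_const hmupc)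
  have hSmatc : ContinuousAt (fun q : P =>
      Smat κ ν μ0 S0 (Cp κ Z D SN μ0 q.2.2) (mup κ Z D SN μ0 q.2.2)) p := by
    unfold Smat
    refine ContinuousAt.add (ContinuousAt.add continuousAt_const ?_)
      (tendsto_finset_sum _ fun i _ => ?_)
    · exact (contAt_vecMulVec (hmupc.sub continuousAt_const)
        (hmupc.sub continuousAt_const)).const_smul κ
    · exact contAt_vecMulVec ((hCpc i).sub hmupc) ((hCpc i).sub hmupc)
  have hn' : (1:ℝ) ≤ (n:ℝ) := by exact_mod_cast hn
  have hM' : (1:ℝ) ≤ (M:ℝ) := by exact_mod_cast hM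
  have hνpos : 0 < ν := by linarith
  have ha : 0 < ν + M - n := by linarith
  have hLpc : ContinuousAt (fun q : P => Lp κ ν Z D SN μ0 S0 q.2.2) p := by
    unfold Lp
    refine contAt_inv (by exact hSmatc.const_smul ((ν + M - n)⁻¹ : ℝ)) ?_
    exact (posDef_smul (Smat_posDef hS0 hνpos hκ.le _ _) (inv_pos.mpr ha)).det_pos.ne'
  have : ContinuousAt (fun q : P =>
      ((Cp κ Z D SN μ0 q.2.2 : Fin M → Fin n → ℝ), mup κ Z D SN μ0 q.2.2,
        Lp κ ν Z D SN μ0 S0 q.2.2)) p := by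
    refine ContinuousAt.prodMk (continuousAt_pi.mpr fun i => hCpc i) (hmupc.prodMk hLpc)
  have hGfun : G n M κ ν Z D SN μ0 S0 = fun q : P =>
      ((Cp κ Z D SN μ0 q.2.2 : Fin M → Fin n → ℝ), mup κ Z D SN μ0 q.2.2,
        Lp κ ν Z D SN μ0 S0 q.2.2) := funext fun q => G_eq κ ν Z D SN μ0 S0 q
  rw [hGfun]
  exact this

end FC

end Stmt14Aux

set_option maxHeartbeats 2000000 in
/-- Every accumulation point `x*` (with positive definite Λ-component)
of the sequence generated by `x^{l+1} = G(x^l)` is a fixed point of G. -/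
theorem stmt_14 (n M : ℕ) (hn : 1 ≤ n) (hM : 1 ≤ M)
    (κ ν : ℝ) (hκ : 0 < κ) (hν : (n : ℝ) - 1 < ν)
    (Z : Fin M → Fin n → ℝ) (D : Fin M → Matrix (Fin n) (Fin n) ℝ)
    (SN : Fin M → Matrix (Fin n) (Fin n) ℝ) (hSN : ∀ i, (SN i).PosDef)
    (μ0 : Fin n → ℝ) (S0 : Matrix (Fin n) (Fin n) ℝ) (hS0 : S0.PosDef)
    (x : ℕ → (Fin M → Fin n → ℝ) × (Fin n → ℝ) × Matrix (Fin n) (Fin n) ℝ)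
    (h0 : (x 0).2.2.PosDef)
    (hrec : ∀ l, x (l + 1) = G n M κ ν Z D SN μ0 S0 (x l))
    (xstar : (Fin M → Fin n → ℝ) × (Fin n → ℝ) × Matrix (Fin n) (Fin n) ℝ)
    (hstar : xstar.2.2.PosDef)
    (φ : ℕ → ℕ) (hφ : StrictMono φ)
    (hlim : Filter.Tendsto (x ∘ φ) Filter.atTop (nhds xstar)) :
    G n M κ ν Z D SN μ0 S0 xstar = xstar := by
  classical
  open Stmt14Aux in
  set F : ((Fin M → Fin n → ℝ) × (Fin n → ℝ) × Matrix (Fin n) (Fin n) ℝ) → ℝ :=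
    fun q => f n M κ ν Z D SN μ0 S0 q.1 q.2.1 q.2.2 with hF
  -- positive definiteness along the sequence
  have hPD : ∀ l, (x l).2.2.PosDef := by
    intro l
    cases l with
    | zero => exact h0
    | succ k =>
      rw [hrec k, Stmt14Aux.G_eq]
      exact Stmt14Aux.Lp_posDef hn hM hν hκ hS0 _
  -- descent
  have hdesc : ∀ l, F (x (l + 1)) ≤ F (x l) := by
    intro l
    have hy := hPD l
    have h1 : f n M κ ν Z D SN μ0 S0 (Cp κ Z D SN μ0 (x l).2.2) (mup κ Z D SN μ0 (x l).2.2)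
        (Lp κ ν Z D SN μ0 S0 (x l).2.2)
        ≤ f n M κ ν Z D SN μ0 S0 (Cp κ Z D SN μ0 (x l).2.2) (mup κ Z D SN μ0 (x l).2.2)
          (x l).2.2 :=
      (Stmt14Aux.key2 hn hM hν hκ hS0 (Cp κ Z D SN μ0 (x l).2.2)
        (mup κ Z D SN μ0 (x l).2.2) hy).1
    have h2 := (Stmt14Aux.key1 (ν := ν) (S0 := S0) (Z := Z) (D := D) (μ0 := μ0) hκ hSN hy (x l).1 (x l).2.1).1
    have hG : F (x (l + 1)) = f n M κ ν Z D SN μ0 S0 (Cp κ Z D SN μ0 (x l).2.2)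
        (mup κ Z D SN μ0 (x l).2.2) (Lp κ ν Z D SN μ0 S0 (x l).2.2) := by
      rw [hF, hrec l, Stmt14Aux.G_eq]
    rw [hG]
    exact le_trans h1 h2
  have hmono : Antitone (fun l => F (x l)) := antitone_nat_of_succ_le hdesc
  -- limit of function values along the subsequence
  have hfcont : ContinuousAt F xstar :=
    Stmt14Aux.f_contAt n M κ ν Z D SN μ0 S0 hstar.det_pos.ne'
  have hfx : Tendsto (fun k => F (x (φ k))) atTop (nhds (F xstar)) :=
    hfcont.tendsto.comp hlim
  have hlow : ∀ l, F xstar ≤ F (x l) := by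
    intro l
    refine le_of_tendsto hfx (Filter.eventually_atTop.mpr ⟨l, fun k hk => ?_⟩)
    exact hmono (le_trans hk hφ.le_apply)
  have hbdd : BddBelow (Set.range fun l => F (x l)) := by
    refine ⟨F xstar, fun y hy => ?_⟩
    obtain ⟨l, rfl⟩ := hy
    exact hlow l
  have hconv : Tendsto (fun l => F (x l)) atTop (nhds (⨅ l, F (x l))) :=
    tendsto_atTop_ciInf hmono hbdd
  have hsub : Tendsto (fun k => F (x (φ k))) atTop (nhds (⨅ l, F (x l))) :=
    hconv.comp hφ.tendsto_atTop
  have hIeq : (⨅ l, F (x l)) = F xstar := tendsto_nhds_unique hsub hfx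
  have hT : Tendsto (fun l => F (x l)) atTop (nhds (F xstar)) := hIeq ▸ hconv
  have hψ : Tendsto (fun k => φ k + 1) atTop atTop :=
    (Filter.tendsto_add_atTop_nat 1).comp hφ.tendsto_atTop
  have hT2 : Tendsto (fun k => F (x (φ k + 1))) atTop (nhds (F xstar)) := hT.comp hψ
  -- limit of x (φ k + 1)
  have hGc : ContinuousAt (G n M κ ν Z D SN μ0 S0) xstar :=
    Stmt14Aux.G_contAt n M κ ν Z D SN μ0 S0 hκ hn hM hν hSN hS0 hstar
  have hGx : Tendsto (fun k => x (φ k + 1)) atTop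
      (nhds (G n M κ ν Z D SN μ0 S0 xstar)) := by
    have h := hGc.tendsto.comp hlim
    have hfun : (fun k => x (φ k + 1))
        = fun k => G n M κ ν Z D SN μ0 S0 (x (φ k)) := funext fun k => hrec (φ k)
    rw [hfun]
    exact h
  have hGPD : (G n M κ ν Z D SN μ0 S0 xstar).2.2.PosDef := by
    rw [Stmt14Aux.G_eq]
    exact Stmt14Aux.Lp_posDef hn hM hν hκ hS0 _
  have hT3 : Tendsto (fun k => F (x (φ k + 1))) atTop
      (nhds (F (G n M κ ν Z D SN μ0 S0 xstar))) :=
    (Stmt14Aux.f_contAt n M κ ν Z D SN μ0 S0 hGPD.det_pos.ne').tendsto.comp hGx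
  have hfeq : F (G n M κ ν Z D SN μ0 S0 xstar) = F xstar := tendsto_nhds_unique hT3 hT2
  -- conclude fixed point
  have hk1 := Stmt14Aux.key1 (ν := ν) (S0 := S0) (Z := Z) (D := D) (μ0 := μ0) hκ hSN hstar xstar.1 xstar.2.1
  have hk2 := Stmt14Aux.key2 (Z := Z) (D := D) (SN := SN) (μ0 := μ0) hn hM hν hκ hS0
    (Cp κ Z D SN μ0 xstar.2.2) (mup κ Z D SN μ0 xstar.2.2) hstar
  have hle1 : f n M κ ν Z D SN μ0 S0 (Cp κ Z D SN μ0 xstar.2.2) (mup κ Z D SN μ0 xstar.2.2)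
      (Lp κ ν Z D SN μ0 S0 xstar.2.2)
      ≤ f n M κ ν Z D SN μ0 S0 (Cp κ Z D SN μ0 xstar.2.2) (mup κ Z D SN μ0 xstar.2.2)
        xstar.2.2 := hk2.1
  have hle2 : f n M κ ν Z D SN μ0 S0 (Cp κ Z D SN μ0 xstar.2.2) (mup κ Z D SN μ0 xstar.2.2)
      xstar.2.2 ≤ F xstar := hk1.1
  have hGval : F (G n M κ ν Z D SN μ0 S0 xstar)
      = f n M κ ν Z D SN μ0 S0 (Cp κ Z D SN μ0 xstar.2.2) (mup κ Z D SN μ0 xstar.2.2)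
        (Lp κ ν Z D SN μ0 S0 xstar.2.2) := by
    rw [hF, Stmt14Aux.G_eq]
  have heq0 : f n M κ ν Z D SN μ0 S0 (Cp κ Z D SN μ0 xstar.2.2) (mup κ Z D SN μ0 xstar.2.2)
      (Lp κ ν Z D SN μ0 S0 xstar.2.2) = F xstar := hGval.symm.trans hfeq
  have heqA : f n M κ ν Z D SN μ0 S0 (Cp κ Z D SN μ0 xstar.2.2) (mup κ Z D SN μ0 xstar.2.2)
      xstar.2.2 = F xstar :=
    le_antisymm hle2 (by rw [← heq0]; exact hle1)
  have heqB : f n M κ ν Z D SN μ0 S0 (Cp κ Z D SN μ0 xstar.2.2) (mup κ Z D SN μ0 xstar.2.2)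
      xstar.2.2
      = f n M κ ν Z D SN μ0 S0 (Cp κ Z D SN μ0 xstar.2.2) (mup κ Z D SN μ0 xstar.2.2)
        (Lp κ ν Z D SN μ0 S0 xstar.2.2) := heqA.trans heq0.symm
  have hCμ := hk1.2 heqA.symm
  have hΛeq : xstar.2.2 = Lp κ ν Z D SN μ0 S0 xstar.2.2 := hk2.2 heqB
  rw [Stmt14Aux.G_eq]
  obtain ⟨hC, hμ⟩ := hCμ
  calc (Cp κ Z D SN μ0 xstar.2.2, mup κ Z D SN μ0 xstar.2.2, Lp κ ν Z D SN μ0 S0 xstar.2.2)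
      = (xstar.1, xstar.2.1, xstar.2.2) := by rw [← hC, ← hμ, ← hΛeq]
    _ = xstar := rfl
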